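/- arXiv:2604.23482 — 2 statements merged into one kernel-verified Lean document; each statement's English description precedes it below -/
import Mathlib

section
/- Let t ≥ 2 be an even integer and let p_1, …, p_t, q be distinct primes with p_i ≡ 5 (mod 8) for all i and q ≡ 3 (mod 8); assume rank_{𝔽₂}(A_P) = t − 1 where P = p_1⋯p_t, and Legendre symbol (p_i/q) = 1 for all i. Order the prime factors of n = Pq as ℓ_1 = p_1, …, ℓ_t = p_t, ℓ_{t+1} = q, and let M be the Monsky matrix of n. Then rank_{𝔽₂}(M) = 2t (so the 2-Selmer rank s_n = 2(t+1) − rank_{𝔽₂}(M) equals 2), and for any v ∈ 𝔽₂^t with A_P v = 𝟏_t, the null space of M in 𝔽₂^{2t+2} is spanned by Ψ(P, P) = (𝟏_t, 0, 𝟏_t, 0) and the vector (v, 0, 𝟏_t + v, 0). -/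
open Finset

/-- The matrix `A` over `𝔽₂` attached to distinct odd primes `ℓ 0, …, ℓ (r-1)`:
off-diagonal entry `a_{ij}` is `1` iff the Legendre symbol `(ℓ j / ℓ i) = -1`,
and `a_{ii} = ∑_{j ≠ i} a_{ij}`. -/
noncomputable def APmat {r : ℕ} (ℓ : Fin r → ℕ) : Matrix (Fin r) (Fin r) (ZMod 2) :=
  fun i j =>
    if i = j then ∑ k ∈ univ.erase i, (if jacobiSym (ℓ k) (ℓ i) = -1 then (1 : ZMod 2) else 0)
    else if jacobiSym (ℓ j) (ℓ i) = -1 then 1 else 0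

/-- The diagonal matrix `D_l` with `(D_l)_{ii} = φ((l / ℓ i))`. -/
noncomputable def monskyD {r : ℕ} (l : ℤ) (ℓ : Fin r → ℕ) : Matrix (Fin r) (Fin r) (ZMod 2) :=
  Matrix.diagonal fun i => if jacobiSym l (ℓ i) = -1 then 1 else 0

/-- The Monsky matrix `[[A + D₂, D₂], [D₂, A + D₋₂]]` of the squarefree odd number
`ℓ 0 ⋯ ℓ (r-1)`. -/
noncomputable def monsky {r : ℕ} (ℓ : Fin r → ℕ) :
    Matrix (Fin r ⊕ Fin r) (Fin r ⊕ Fin r) (ZMod 2) :=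
  Matrix.fromBlocks (APmat ℓ + monskyD 2 ℓ) (monskyD 2 ℓ)
    (monskyD 2 ℓ) (APmat ℓ + monskyD (-2) ℓ)

/-- The exponent vector of a positive divisor `u` of `ℓ 0 ⋯ ℓ (r-1)`. -/
def expVec {r : ℕ} (ℓ : Fin r → ℕ) (u : ℕ) : Fin r → ZMod 2 :=
  fun i => if ℓ i ∣ u then 1 else 0

/-- `Ψ(u, u') = (ε(u), ε(u')) ∈ 𝔽₂^{2r}`. -/
def psiVec {r : ℕ} (ℓ : Fin r → ℕ) (u u' : ℕ) : (Fin r ⊕ Fin r) → ZMod 2 :=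
  Sum.elim (expVec ℓ u) (expVec ℓ u')

lemma jac2_of_mod8 {n : ℕ} (h : n % 8 = 5 ∨ n % 8 = 3) : jacobiSym 2 n = -1 := by
  have hodd : Odd n := Nat.odd_iff.mpr (by omega)
  rw [jacobiSym.at_two hodd, ZMod.χ₈_nat_eq_if_mod_eight]
  rw [if_neg (by omega), if_neg (by omega)]
lemma jacneg2_of_mod8_5 {n : ℕ} (h : n % 8 = 5) : jacobiSym (-2) n = -1 := by
  have hodd : Odd n := Nat.odd_iff.mpr (by omega)
  rw [jacobiSym.at_neg_two hodd, ZMod.χ₈'_nat_eq_if_mod_eight]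
  rw [if_neg (by omega), if_neg (by omega)]
lemma jacneg2_of_mod8_3 {n : ℕ} (h : n % 8 = 3) : jacobiSym (-2) n = 1 := by
  have hodd : Odd n := Nat.odd_iff.mpr (by omega)
  rw [jacobiSym.at_neg_two hodd, ZMod.χ₈'_nat_eq_if_mod_eight]
  rw [if_neg (by omega), if_pos (by omega)]

section
variable {t : ℕ} {p : Fin t → ℕ} {q : ℕ}

lemma AP_snoc_entry_last_row (hcross : ∀ i, jacobiSym (p i) q = 1)
    (j : Fin (t+1)) : APmat (Fin.snoc p q) (Fin.last t) j = 0 := by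
  unfold APmat
  rcases eq_or_ne (Fin.last t) j with rfl | hne
  · rw [if_pos rfl]
    refine Finset.sum_eq_zero fun k hk => ?_
    obtain ⟨k', rfl⟩ := Fin.exists_castSucc_eq.mpr (Finset.ne_of_mem_erase hk)
    rw [Fin.snoc_castSucc, Fin.snoc_last, hcross k']
    norm_num
  · rw [if_neg hne]
    obtain ⟨j', rfl⟩ := Fin.exists_castSucc_eq.mpr (Ne.symm hne)
    rw [Fin.snoc_castSucc, Fin.snoc_last, hcross j']
    norm_num

lemma AP_snoc_entry_last_col (hp4 : ∀ i, p i % 4 = 1) (hqodd : Odd q)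
    (hcross : ∀ i, jacobiSym (p i) q = 1)
    (i : Fin t) : APmat (Fin.snoc p q) (Fin.castSucc i) (Fin.last t) = 0 := by
  unfold APmat
  rw [if_neg (Fin.castSucc_lt_last i).ne]
  rw [Fin.snoc_castSucc, Fin.snoc_last,
    ← jacobiSym.quadratic_reciprocity_one_mod_four (hp4 i) hqodd, hcross i]
  norm_num

lemma AP_snoc_entry_cast (hp4 : ∀ i, p i % 4 = 1) (hqodd : Odd q)
    (hcross : ∀ i, jacobiSym (p i) q = 1)
    (i j : Fin t) :
    APmat (Fin.snoc p q) (Fin.castSucc i) (Fin.castSucc j) = APmat p i j := by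
  unfold APmat
  rcases eq_or_ne i j with rfl | hne
  · rw [if_pos rfl, if_pos rfl]
    have key : ∀ (m : ℕ) (a : Fin m) (g : Fin m → ZMod 2),
        ∑ k ∈ univ.erase a, g k = (∑ k, g k) + g a := by
      intro m a g
      have h1 : ∑ k ∈ univ.erase a, g k + g a = ∑ k, g k := by
        rw [add_comm, Finset.add_sum_erase _ g (Finset.mem_univ _)]
      rw [← h1, add_assoc, CharTwo.add_self_eq_zero, add_zero]
    rw [key, key, Fin.sum_univ_castSucc]
    have hlast : (if jacobiSym ((Fin.snoc p q : Fin (t+1) → ℕ) (Fin.last t))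
        ((Fin.snoc p q : Fin (t+1) → ℕ) (Fin.castSucc i)) = -1 then (1 : ZMod 2) else 0) = 0 := by
      rw [Fin.snoc_castSucc, Fin.snoc_last,
        ← jacobiSym.quadratic_reciprocity_one_mod_four (hp4 i) hqodd, hcross i]
      norm_num
    rw [hlast, add_zero]
    simp only [Fin.snoc_castSucc]
  · rw [if_neg (by simpa using hne), if_neg hne, Fin.snoc_castSucc, Fin.snoc_castSucc]

lemma AP_snoc_mulVec (hp4 : ∀ i, p i % 4 = 1) (hqodd : Odd q)
    (hcross : ∀ i, jacobiSym (p i) q = 1) (x : Fin (t+1) → ZMod 2) :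
    (APmat (r := t+1) (Fin.snoc p q)).mulVec x
      = Fin.snoc (n := t) (α := fun _ => ZMod 2) ((APmat p).mulVec (fun j : Fin t => x j.castSucc)) 0 := by
  funext i
  induction i using Fin.lastCases with
  | last =>
    rw [Fin.snoc_last]
    show ∑ j, APmat (Fin.snoc p q) (Fin.last t) j * x j = 0
    exact Finset.sum_eq_zero fun j _ => by
      rw [AP_snoc_entry_last_row hcross, zero_mul]
  | cast i =>
    rw [Fin.snoc_castSucc]
    show ∑ j, APmat (Fin.snoc p q) (Fin.castSucc i) j * x j
      = ∑ j : Fin t, APmat p i j * x j.castSucc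
    rw [Fin.sum_univ_castSucc]
    rw [AP_snoc_entry_last_col hp4 hqodd hcross, zero_mul, add_zero]
    exact Finset.sum_congr rfl fun j _ => by
      rw [AP_snoc_entry_cast hp4 hqodd hcross]

lemma monskyD_eq_one {r : ℕ} {ℓ : Fin r → ℕ} (h : ∀ i, jacobiSym 2 (ℓ i) = -1) :
    monskyD 2 ℓ = 1 := by
  have h2 : (fun i => if jacobiSym 2 (ℓ i) = -1 then (1:ZMod 2) else 0) = fun _ => 1 :=
    funext fun i => if_pos (h i)
  rw [monskyD, h2, Matrix.diagonal_one]

lemma monskyDneg_mulVec (hp5 : ∀ i, p i % 8 = 5) (hq3 : q % 8 = 3)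
    (y : Fin (t+1) → ZMod 2) :
    (monskyD (r := t+1) (-2) (Fin.snoc p q)).mulVec y = Fin.snoc (n := t) (α := fun _ => ZMod 2) (fun j : Fin t => y j.castSucc) 0 := by
  funext i
  unfold monskyD
  rw [Matrix.mulVec_diagonal]
  induction i using Fin.lastCases with
  | last =>
    rw [Fin.snoc_last, Fin.snoc_last, jacneg2_of_mod8_3 hq3, if_neg (by norm_num), zero_mul]
  | cast i =>
    rw [Fin.snoc_castSucc, Fin.snoc_castSucc, jacneg2_of_mod8_5 (hp5 i), if_pos rfl, one_mul]

lemma APmat_mulVec_one {r : ℕ} (ℓ : Fin r → ℕ) :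
    (APmat ℓ).mulVec (fun _ => 1) = 0 := by
  funext i
  show ∑ j, APmat ℓ i j * 1 = (0 : ZMod 2)
  simp only [mul_one]
  have hdiag : ∑ j ∈ univ.erase i, APmat ℓ i j = APmat ℓ i i := by
    rw [show APmat ℓ i i = ∑ k ∈ univ.erase i,
        (if jacobiSym (ℓ k) (ℓ i) = -1 then (1:ZMod 2) else 0) from if_pos rfl]
    exact Finset.sum_congr rfl fun j hj =>
      if_neg (Ne.symm (Finset.mem_erase.mp hj).1)
  rw [← Finset.add_sum_erase _ _ (Finset.mem_univ i), hdiag, CharTwo.add_self_eq_zero]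

/-- the sum-of-coordinates functional -/
def sumF (r : ℕ) : (Fin r → ZMod 2) →ₗ[ZMod 2] ZMod 2 where
  toFun x := ∑ i, x i
  map_add' x y := by simp [Finset.sum_add_distrib]
  map_smul' c x := by simp [Finset.mul_sum]

lemma exists_v (ht : Even t) (ht2 : 2 ≤ t) (hpodd : ∀ i, Odd (p i))
    (hp4 : ∀ i, p i % 4 = 1) (hrank : (APmat p).rank = t - 1) :
    ∃ v, (APmat p).mulVec v = (fun _ => 1) := by
  have hcol : ∀ j, ∑ i, APmat p i j = 0 := by
    intro j
    have hsym : ∀ i ∈ univ.erase j, APmat p i j = APmat p j i := by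
      intro i hi
      have hij : i ≠ j := (Finset.mem_erase.mp hi).1
      show (if i = j then _ else _) = (if j = i then _ else _)
      rw [if_neg hij, if_neg (Ne.symm hij),
        jacobiSym.quadratic_reciprocity_one_mod_four (hp4 j) (hpodd i)]
    have hdiag : ∑ i ∈ univ.erase j, APmat p j i = APmat p j j := by
      rw [show APmat p j j = ∑ k ∈ univ.erase j,
          (if jacobiSym (p k) (p j) = -1 then (1:ZMod 2) else 0) from if_pos rfl]
      exact Finset.sum_congr rfl fun i hi =>
        if_neg (Ne.symm (Finset.mem_erase.mp hi).1)
    rw [← Finset.add_sum_erase _ _ (Finset.mem_univ j),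
      Finset.sum_congr rfl hsym, hdiag, CharTwo.add_self_eq_zero]
  have hrange_le : LinearMap.range (APmat p).mulVecLin ≤ LinearMap.ker (sumF t) := by
    rintro y ⟨x, rfl⟩
    show ∑ i, (APmat p).mulVec x i = 0
    have : ∀ i, (APmat p).mulVec x i = ∑ j, APmat p i j * x j := fun i => rfl
    simp only [this]
    rw [Finset.sum_comm]
    refine Finset.sum_eq_zero fun j _ => ?_
    rw [← Finset.sum_mul, hcol j, zero_mul]
  have hkerf : Module.finrank (ZMod 2) (LinearMap.ker (sumF t)) = t - 1 := by
    have hsurj : Function.Surjective (sumF t) := by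
      intro c
      refine ⟨Pi.single ⟨0, by omega⟩ c, ?_⟩
      show ∑ i, Pi.single (⟨0, by omega⟩ : Fin t) c i = c
      rw [Finset.sum_pi_single']
      exact if_pos (Finset.mem_univ _)
    have h1 := LinearMap.finrank_range_add_finrank_ker (sumF t)
    rw [LinearMap.range_eq_top.mpr hsurj, finrank_top] at h1
    simp only [Module.finrank_fintype_fun_eq_card, Fintype.card_fin,
      Module.finrank_self] at h1
    omega
  have hre : LinearMap.range (APmat p).mulVecLin = LinearMap.ker (sumF t) := by
    refine Submodule.eq_of_le_of_finrank_eq hrange_le ?_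
    rw [hkerf]
    exact hrank
  have hone : (fun _ => (1:ZMod 2) : Fin t → ZMod 2) ∈ LinearMap.ker (sumF t) := by
    show ∑ _i : Fin t, (1:ZMod 2) = 0
    rw [Finset.sum_const, Finset.card_univ, Fintype.card_fin, nsmul_eq_mul, mul_one]
    rw [ZMod.natCast_eq_zero_iff]
    exact ht.two_dvd
  rw [← hre] at hone
  obtain ⟨v, hv⟩ := hone
  exact ⟨v, hv⟩

lemma ker_AP_eq (ht2 : 2 ≤ t) (hrank : (APmat p).rank = t - 1) :
    LinearMap.ker (APmat p).mulVecLin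
      = Submodule.span (ZMod 2) {(fun _ => 1 : Fin t → ZMod 2)} := by
  have hone_ne : (fun _ => (1:ZMod 2) : Fin t → ZMod 2) ≠ 0 := by
    intro h
    have := congrFun h ⟨0, by omega⟩
    exact one_ne_zero this
  have hle : Submodule.span (ZMod 2) {(fun _ => 1 : Fin t → ZMod 2)}
      ≤ LinearMap.ker (APmat p).mulVecLin := by
    rw [Submodule.span_le]
    rintro y rfl
    exact APmat_mulVec_one p
  refine (Submodule.eq_of_le_of_finrank_eq hle ?_).symm
  have h1 := LinearMap.finrank_range_add_finrank_ker (APmat p).mulVecLin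
  simp only [Module.finrank_fintype_fun_eq_card, Fintype.card_fin] at h1
  have h2 : Module.finrank (ZMod 2) (LinearMap.range (APmat p).mulVecLin) = t - 1 := hrank
  rw [finrank_span_singleton hone_ne]
  omega

lemma monsky_mulVec_eq (hp5 : ∀ i, p i % 8 = 5) (hq3 : q % 8 = 3)
    (hp4 : ∀ i, p i % 4 = 1) (hqodd : Odd q)
    (hcross : ∀ i, jacobiSym (p i) q = 1)
    (w : Fin (t+1) ⊕ Fin (t+1) → ZMod 2) :
    (monsky (r := t+1) (Fin.snoc p q)).mulVec w =
      Sum.elim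
        (Fin.snoc (n := t) (α := fun _ => ZMod 2)
          (fun j => (APmat p).mulVec (fun k => w (Sum.inl k.castSucc)) j
             + w (Sum.inl j.castSucc) + w (Sum.inr j.castSucc))
          (w (Sum.inl (Fin.last t)) + w (Sum.inr (Fin.last t))))
        (Fin.snoc (n := t) (α := fun _ => ZMod 2)
          (fun j => w (Sum.inl j.castSucc)
             + ((APmat p).mulVec (fun k => w (Sum.inr k.castSucc)) j
             + w (Sum.inr j.castSucc)))
          (w (Sum.inl (Fin.last t)))) := by
  have hD2 : monskyD 2 (Fin.snoc p q) = 1 := monskyD_eq_one (fun i => by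
    induction i using Fin.lastCases with
    | last => rw [Fin.snoc_last]; exact jac2_of_mod8 (Or.inr hq3)
    | cast i => rw [Fin.snoc_castSucc]; exact jac2_of_mod8 (Or.inl (hp5 _)))
  conv_lhs => rw [monsky, ← Sum.elim_comp_inl_inr w, Matrix.fromBlocks_mulVec]
  rw [hD2, Matrix.add_mulVec, Matrix.add_mulVec, Matrix.one_mulVec, Matrix.one_mulVec,
    AP_snoc_mulVec hp4 hqodd hcross, AP_snoc_mulVec hp4 hqodd hcross,
    monskyDneg_mulVec hp5 hq3]
  funext i
  rcases i with j | j <;> induction j using Fin.lastCases <;>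
    simp [Fin.snoc_last, Fin.snoc_castSucc, Function.comp]


end


/-- For `n = p_1 ⋯ p_t q` with `t ≥ 2` even, `p_i ≡ 5 (mod 8)`, `q ≡ 3 (mod 8)`,
`rank A_P = t - 1` and `(p_i / q) = 1`, the Monsky matrix `M` of `n` (with the prime
factors ordered as `p_1, …, p_t, q`) has rank `2 t` (so the 2-Selmer rank is `2`),
and for any `v` with `A_P v = 𝟏_t` its null space is spanned by
`Ψ(P, P) = (𝟏_t, 0, 𝟏_t, 0)` and `(v, 0, 𝟏_t + v, 0)`. -/
theorem stmt7 (t : ℕ) (ht : Even t) (ht2 : 2 ≤ t)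
    (p : Fin t → ℕ) (q : ℕ)
    (hp : ∀ i, (p i).Prime) (hq : q.Prime)
    (hinj : Function.Injective p) (hpq : ∀ i, p i ≠ q)
    (hp5 : ∀ i, p i % 8 = 5) (hq3 : q % 8 = 3)
    (hrank : (APmat p).rank = t - 1)
    (hleg : ∀ i, jacobiSym (p i) q = 1) :
    (monsky (Fin.snoc p q)).rank = 2 * t ∧
    psiVec (Fin.snoc p q) (∏ i, p i) (∏ i, p i) =
      Sum.elim (Fin.snoc (fun _ => 1) 0) (Fin.snoc (fun _ => 1) 0) ∧
    ∀ v : Fin t → ZMod 2, (APmat p).mulVec v = (fun _ => 1) →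
      LinearMap.ker (monsky (Fin.snoc p q)).mulVecLin =
        Submodule.span (ZMod 2)
          {psiVec (Fin.snoc p q) (∏ i, p i) (∏ i, p i),
           Sum.elim (Fin.snoc v 0) (Fin.snoc (fun i => 1 + v i) 0)} := by
  have hpodd : ∀ i, Odd (p i) := fun i => Nat.odd_iff.mpr (by have := hp5 i; omega)
  have hp4 : ∀ i, p i % 4 = 1 := fun i => by have := hp5 i; omega
  have hqodd : Odd q := Nat.odd_iff.mpr (by omega)
  -- part 2
  have hpsi : psiVec (Fin.snoc p q) (∏ i, p i) (∏ i, p i) =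
      Sum.elim (Fin.snoc (fun _ => 1) 0) (Fin.snoc (fun _ => 1) 0) := by
    have hqnd : ¬ q ∣ ∏ i, p i := by
      intro hdvd
      obtain ⟨i, _, hdi⟩ := (Prime.dvd_finset_prod_iff hq.prime p).mp hdvd
      exact hpq i (((Nat.prime_dvd_prime_iff_eq hq (hp i)).mp hdi).symm)
    funext i
    rcases i with j | j <;> induction j using Fin.lastCases <;>
      simp [psiVec, expVec, Fin.snoc_last, Fin.snoc_castSucc, hqnd,
        Finset.dvd_prod_of_mem]
  -- part 3
  have hker : ∀ v : Fin t → ZMod 2, (APmat p).mulVec v = (fun _ => 1) →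
      LinearMap.ker (monsky (Fin.snoc p q)).mulVecLin =
        Submodule.span (ZMod 2)
          {psiVec (Fin.snoc p q) (∏ i, p i) (∏ i, p i),
           Sum.elim (Fin.snoc v 0) (Fin.snoc (fun i => 1 + v i) 0)} := by
    intro v hv
    rw [hpsi]
    apply le_antisymm
    · intro w hw
      rw [LinearMap.mem_ker, Matrix.mulVecLin_apply,
        monsky_mulVec_eq hp5 hq3 hp4 hqodd hleg] at hw
      set x' : Fin t → ZMod 2 := fun j => w (Sum.inl j.castSucc) with hx'
      set y' : Fin t → ZMod 2 := fun j => w (Sum.inr j.castSucc) with hy'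
      have h1 : ∀ j : Fin t, (APmat p).mulVec x' j + x' j + y' j = 0 := fun j => by
        have h := congrFun hw (Sum.inl j.castSucc)
        simpa [Fin.snoc_castSucc] using h
      have h2 : ∀ j : Fin t, x' j + ((APmat p).mulVec y' j + y' j) = 0 := fun j => by
        have h := congrFun hw (Sum.inr j.castSucc)
        simpa [Fin.snoc_castSucc] using h
      have ha : w (Sum.inl (Fin.last t)) = 0 := by
        have h := congrFun hw (Sum.inr (Fin.last t))
        simpa [Fin.snoc_last] using h
      have hb : w (Sum.inr (Fin.last t)) = 0 := by
        have h := congrFun hw (Sum.inl (Fin.last t))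
        simp only [Sum.elim_inl, Fin.snoc_last, Pi.zero_apply] at h
        exact (by decide : ∀ a b : ZMod 2, a = 0 → a + b = 0 → b = 0)
          _ _ ha h
      have hy'eq : y' = (APmat p).mulVec x' + x' := by
        funext j
        exact (by decide : ∀ a b c : ZMod 2, a + b + c = 0 → c = a + b)
          _ _ _ (h1 j)
      have hA2 : (APmat p).mulVec ((APmat p).mulVec x') = 0 := by
        funext j
        have e2 := h2 j
        rw [hy'eq, Matrix.mulVec_add] at e2
        simp only [Pi.add_apply] at e2
        have e1 := h1 j
        simp only [Pi.zero_apply]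
        exact (by decide : ∀ a b c : ZMod 2,
          c + ((a + b) + (b + c)) = 0 → a = 0) _ _ _ e2
      have hmem : (APmat p).mulVec x' ∈ LinearMap.ker (APmat p).mulVecLin := by
        rw [LinearMap.mem_ker, Matrix.mulVecLin_apply]; exact hA2
      rw [ker_AP_eq ht2 hrank, Submodule.mem_span_singleton] at hmem
      obtain ⟨c, hc⟩ := hmem
      have hmem2 : x' + c • v ∈ LinearMap.ker (APmat p).mulVecLin := by
        rw [LinearMap.mem_ker, Matrix.mulVecLin_apply, Matrix.mulVec_add,
          Matrix.mulVec_smul, hv, ← hc]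
        funext j
        simp only [Pi.add_apply, Pi.smul_apply, Pi.zero_apply, smul_eq_mul]
        exact (by decide : ∀ a : ZMod 2, a + a = 0) _
      rw [ker_AP_eq ht2 hrank, Submodule.mem_span_singleton] at hmem2
      obtain ⟨d, hd⟩ := hmem2
      rw [Submodule.mem_span_pair]
      refine ⟨d, c, ?_⟩
      funext i
      have hcj : ∀ j : Fin t, (APmat p).mulVec x' j = c := fun j => by
        have := congrFun hc j
        simpa [smul_eq_mul] using this.symm
      have hdj : ∀ j : Fin t, x' j + c * v j = d := fun j => by
        have := congrFun hd j
        simp only [Pi.smul_apply, Pi.add_apply, smul_eq_mul, mul_one] at this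
        exact this.symm
      rcases i with j | j <;> induction j using Fin.lastCases
      · -- inl last
        simp only [Pi.add_apply, Pi.smul_apply, Sum.elim_inl, Fin.snoc_last,
          smul_eq_mul, mul_zero, add_zero, zero_add, ha]
      · -- inl castSucc
        rename_i j
        simp only [Pi.add_apply, Pi.smul_apply, Sum.elim_inl, Fin.snoc_castSucc,
          smul_eq_mul, mul_one]
        exact (by decide : ∀ cc dd xx vv : ZMod 2,
          xx + cc * vv = dd → dd + cc * vv = xx) _ _ _ _ (hdj j)
      · -- inr last
        simp only [Pi.add_apply, Pi.smul_apply, Sum.elim_inr, Fin.snoc_last,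
          smul_eq_mul, mul_zero, add_zero, zero_add, hb]
      · -- inr castSucc
        rename_i j
        simp only [Pi.add_apply, Pi.smul_apply, Sum.elim_inr, Fin.snoc_castSucc,
          smul_eq_mul, mul_one]
        have hyj : y' j = (APmat p).mulVec x' j + x' j := by
          rw [hy'eq]; rfl
        exact (by decide : ∀ cc dd xx vv yy aa : ZMod 2,
          yy = aa + xx → aa = cc → xx + cc * vv = dd →
            dd + cc * (1 + vv) = yy) _ _ _ _ _ _ hyj (hcj j) (hdj j)
    · rw [Submodule.span_le]
      have hone : (APmat p).mulVec (fun _ => (1 : ZMod 2)) = 0 := APmat_mulVec_one p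
      have h11 : (1 : ZMod 2) + 1 = 0 := by decide
      rintro u hu
      simp only [Set.mem_insert_iff, Set.mem_singleton_iff] at hu
      rw [SetLike.mem_coe, LinearMap.mem_ker, Matrix.mulVecLin_apply]
      rcases hu with rfl | rfl
      · rw [monsky_mulVec_eq hp5 hq3 hp4 hqodd hleg]
        have harg1 : (fun k : Fin t =>
            (Sum.elim (Fin.snoc (fun _ => (1:ZMod 2)) 0) (Fin.snoc (fun _ => (1:ZMod 2)) 0) :
              Fin (t+1) ⊕ Fin (t+1) → ZMod 2) (Sum.inl k.castSucc)) = fun _ => 1 :=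
          funext fun k => by simp
        have harg2 : (fun k : Fin t =>
            (Sum.elim (Fin.snoc (fun _ => (1:ZMod 2)) 0) (Fin.snoc (fun _ => (1:ZMod 2)) 0) :
              Fin (t+1) ⊕ Fin (t+1) → ZMod 2) (Sum.inr k.castSucc)) = fun _ => 1 :=
          funext fun k => by simp
        funext i
        rcases i with j | j <;> induction j using Fin.lastCases <;>
          simp [harg1, harg2, hone, h11]
      · rw [monsky_mulVec_eq hp5 hq3 hp4 hqodd hleg]
        have hmv2 : (APmat p).mulVec (fun k => 1 + v k) = fun _ => 1 := by
          have he : (fun k => 1 + v k) = (fun _ => (1 : ZMod 2)) + v := rfl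
          rw [he, Matrix.mulVec_add, hone, hv]
          funext j; simp
        funext i
        rcases i with j | j <;> induction j using Fin.lastCases <;>
          simp only [Sum.elim_inl, Sum.elim_inr,
            Fin.snoc_last, Fin.snoc_castSucc, Pi.zero_apply, add_zero, zero_add,
            hmv2, hv]
        · exact (by decide : ∀ a : ZMod 2, 1 + a + (1 + a) = 0) _
        · exact (by decide : ∀ a : ZMod 2, a + (1 + (1 + a)) = 0) _
  -- part 1
  obtain ⟨v₀, hv₀⟩ := exists_v ht ht2 hpodd hp4 hrank
  have hkv := hker v₀ hv₀
  rw [hpsi] at hkv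
  have hw1 : ∀ j : Fin t,
      (Sum.elim (Fin.snoc (fun _ => (1:ZMod 2)) 0) (Fin.snoc (fun _ => (1:ZMod 2)) 0) :
        Fin (t+1) ⊕ Fin (t+1) → ZMod 2) (Sum.inl j.castSucc) = 1 :=
    fun j => by simp [Fin.snoc_castSucc]
  have hrankM : (monsky (Fin.snoc p q)).rank = 2 * t := by
    have hind : LinearIndependent (ZMod 2)
        ![(Sum.elim (Fin.snoc (fun _ => (1:ZMod 2)) 0) (Fin.snoc (fun _ => (1:ZMod 2)) 0) :
            Fin (t+1) ⊕ Fin (t+1) → ZMod 2),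
          Sum.elim (Fin.snoc v₀ 0) (Fin.snoc (fun i => 1 + v₀ i) 0)] := by
      rw [LinearIndependent.pair_iff]
      intro s c h
      have e1 := congrFun h (Sum.inl ((⟨0, by omega⟩ : Fin t).castSucc))
      have e2 := congrFun h (Sum.inr ((⟨0, by omega⟩ : Fin t).castSucc))
      simp only [Pi.add_apply, Pi.smul_apply, Sum.elim_inl, Sum.elim_inr,
        Fin.snoc_castSucc, smul_eq_mul, mul_one, Pi.zero_apply] at e1 e2
      exact (by decide : ∀ s c x : ZMod 2,
        s + c * x = 0 → s + c * (1 + x) = 0 → s = 0 ∧ c = 0) _ _ _ e1 e2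
    have hsp : ({(Sum.elim (Fin.snoc (fun _ => (1:ZMod 2)) 0)
          (Fin.snoc (fun _ => (1:ZMod 2)) 0) :
            Fin (t+1) ⊕ Fin (t+1) → ZMod 2),
          Sum.elim (Fin.snoc v₀ 0) (Fin.snoc (fun i => 1 + v₀ i) 0)} :
          Set (Fin (t+1) ⊕ Fin (t+1) → ZMod 2)) =
        Set.range ![(Sum.elim (Fin.snoc (fun _ => (1:ZMod 2)) 0)
          (Fin.snoc (fun _ => (1:ZMod 2)) 0) :
            Fin (t+1) ⊕ Fin (t+1) → ZMod 2),
          Sum.elim (Fin.snoc v₀ 0) (Fin.snoc (fun i => 1 + v₀ i) 0)] := by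
      simp [Set.pair_comm]
    have hfr : Module.finrank (ZMod 2)
        (LinearMap.ker (monsky (Fin.snoc p q)).mulVecLin) = 2 := by
      rw [hkv, hsp, finrank_span_eq_card hind, Fintype.card_fin]
    have hrn := LinearMap.finrank_range_add_finrank_ker
      (monsky (Fin.snoc p q)).mulVecLin
    rw [hfr] at hrn
    simp only [Module.finrank_fintype_fun_eq_card, Fintype.card_sum,
      Fintype.card_fin] at hrn
    have : (monsky (Fin.snoc p q)).rank
        = Module.finrank (ZMod 2) (LinearMap.range (monsky (Fin.snoc p q)).mulVecLin) := rfl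
    omega
  exact ⟨hrankM, hpsi, hker⟩
end

section
/- Let t be an odd positive integer and let p_1, …, p_t, q be distinct primes with p_i ≡ 5 (mod 8) for all i and q ≡ 7 (mod 8), and suppose the Legendre symbol (q/p_i) = 1 for all i; set P = p_1⋯p_t. If there exist nonzero integers x, y, z, w with gcd(x, y) = 1 satisfying x² + Py² = z² and x² − Py² = qw², then the quartic residue symbol (q/P)_4 = −1, i.e., the number of indices i ∈ {1,…,t} with q^{(p_i−1)/4} ≡ −1 (mod p_i) is odd. -/
open Finset

private theorem jacobi_prod_right {ι : Type*} (a : ℤ) (s : Finset ι) (f : ι → ℕ)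
    (hf : ∀ i ∈ s, f i ≠ 0) :
    jacobiSym a (∏ i ∈ s, f i) = ∏ i ∈ s, jacobiSym a (f i) := by
  induction s using Finset.cons_induction with
  | empty => simp
  | cons i s his ih =>
    rw [Finset.prod_cons, Finset.prod_cons,
      jacobiSym.mul_right' a (hf i (Finset.mem_cons_self i s))
        (Finset.prod_ne_zero_iff.mpr fun j hj => hf j (Finset.mem_cons_of_mem hj)),
      ih fun j hj => hf j (Finset.mem_cons_of_mem hj)]

private theorem gcd_one_of_no_prime {a b : ℤ}
    (h : ∀ r : ℕ, r.Prime → (r:ℤ) ∣ a → (r:ℤ) ∣ b → False) : Int.gcd a b = 1 := by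
  by_contra hg
  obtain ⟨r, hr, hrd⟩ := Nat.exists_prime_and_dvd hg
  exact h r hr ((Int.natCast_dvd_natCast.mpr hrd).trans (Int.gcd_dvd_left _ _))
    ((Int.natCast_dvd_natCast.mpr hrd).trans (Int.gcd_dvd_right _ _))

private theorem gcd_natAbs_right (a b : ℤ) : Int.gcd a (↑b.natAbs) = Int.gcd a b := by
  simp [Int.gcd, Int.natAbs_abs]

/-- Let `t` be odd and `p_1, …, p_t, q` distinct primes with `p_i ≡ 5 (mod 8)`,
`q ≡ 7 (mod 8)` and Legendre symbol `(q / p_i) = 1` for all `i`; set `P = p_1 ⋯ p_t`.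
If there are nonzero integers `x, y, z, w` with `gcd(x, y) = 1` satisfying
`x² + P y² = z²` and `x² − P y² = q w²`, then the quartic residue symbol
`(q / P)₄ = -1`, i.e. the number of indices `i` with
`q^((p_i - 1)/4) ≡ -1 (mod p_i)` is odd. -/
theorem stmt13 (t : ℕ) (ht : Odd t)
    (p : Fin t → ℕ) (q : ℕ)
    (hp : ∀ i, (p i).Prime) (hq : q.Prime)
    (hinj : Function.Injective p) (hpq : ∀ i, p i ≠ q)
    (hp5 : ∀ i, p i % 8 = 5) (hq7 : q % 8 = 7)
    (hleg : ∀ i, jacobiSym q (p i) = 1)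
    (x y z w : ℤ) (hx : x ≠ 0) (hy : y ≠ 0) (hz : z ≠ 0) (hw : w ≠ 0)
    (hgcd : Int.gcd x y = 1)
    (heq1 : x ^ 2 + (∏ i, (p i : ℤ)) * y ^ 2 = z ^ 2)
    (heq2 : x ^ 2 - (∏ i, (p i : ℤ)) * y ^ 2 = (q : ℤ) * w ^ 2) :
    Odd (univ.filter fun i => (q : ZMod (p i)) ^ ((p i - 1) / 4) = -1).card := by
  have instF : ∀ i, Fact (p i).Prime := fun i => ⟨hp i⟩
  set P : ℕ := ∏ i, p i with hPdef
  have hPz : (∏ i, (p i : ℤ)) = (P : ℤ) := by rw [hPdef]; push_cast; rfl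
  rw [hPz] at heq1 heq2
  have hpne : ∀ i, p i ≠ 0 := fun i => (hp i).ne_zero
  -- P mod 8
  have hP8z : (P : ZMod 8) = 5 := by
    rw [hPdef, Nat.cast_prod]
    rw [Finset.prod_congr rfl fun i _ => show ((p i : ℕ) : ZMod 8) = 5 by
      rw [← ZMod.natCast_mod, hp5 i]; rfl]
    rw [Finset.prod_const, Finset.card_univ, Fintype.card_fin]
    obtain ⟨k, hk⟩ := ht
    rw [hk, pow_add, pow_mul, pow_one, show (5:ZMod 8)^2 = 1 by decide, one_pow, one_mul]
  have hP8 : P % 8 = 5 := by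
    have h1 : P ≡ 5 [MOD 8] := (ZMod.natCast_eq_natCast_iff P 5 8).mp (by rw [hP8z]; norm_num)
    have h2 : P % 8 = 5 % 8 := h1
    omega
  have hP4 : P % 4 = 1 := by omega
  have hPodd : Odd P := Nat.odd_iff.mpr (by omega)
  -- mod 8 analysis
  have h81 : (x : ZMod 8)^2 + 5*(y:ZMod 8)^2 = (z:ZMod 8)^2 := by
    have h := congrArg (fun n : ℤ => (n : ZMod 8)) heq1
    push_cast at h
    rwa [hP8z] at h
  have h82 : (x : ZMod 8)^2 - 5*(y:ZMod 8)^2 = 7*(w:ZMod 8)^2 := by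
    have h := congrArg (fun n : ℤ => (n : ZMod 8)) heq2
    push_cast at h
    rwa [hP8z, show ((q:ℕ) : ZMod 8) = 7 by rw [← ZMod.natCast_mod, hq7]; rfl] at h
  have hkey8 : (x:ZMod 8)^2 = 4 ∧ (y:ZMod 8)^2 = 1 ∧ (w:ZMod 8)^2 = 1 := by
    have hdec : ∀ X Y Z W : ZMod 8, X^2 + 5*Y^2 = Z^2 → X^2 - 5*Y^2 = 7*W^2 →
        (ZMod.castHom (show (2:ℕ) ∣ 8 by norm_num) (ZMod 2) X = 0 →
         ZMod.castHom (show (2:ℕ) ∣ 8 by norm_num) (ZMod 2) Y ≠ 0) →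
        (X^2 = 4 ∧ Y^2 = 1 ∧ W^2 = 1) := by decide
    refine hdec _ _ _ _ h81 h82 ?_
    intro hX hY
    rw [map_intCast] at hX hY
    have h2x : (2:ℤ) ∣ x := by exact_mod_cast (ZMod.intCast_zmod_eq_zero_iff_dvd x 2).mp hX
    have h2y : (2:ℤ) ∣ y := by exact_mod_cast (ZMod.intCast_zmod_eq_zero_iff_dvd y 2).mp hY
    have hd : (2:ℤ) ∣ (Int.gcd x y : ℤ) := Int.dvd_coe_gcd h2x h2y
    rw [hgcd] at hd
    norm_num at hd
  obtain ⟨hx8, hy8, hw8⟩ := hkey8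
  have hmod8 : ∀ (a c : ℤ), (a : ZMod 8) = (c : ZMod 8) → a % 8 = c % 8 :=
    fun a c h => (ZMod.intCast_eq_intCast_iff' a c 8).mp h
  obtain ⟨u, hxu, hu2⟩ : ∃ u : ℤ, x = 2*u ∧ u % 2 = 1 := by
    have hx26 : (x : ZMod 8) = 2 ∨ (x : ZMod 8) = 6 :=
      (show ∀ X : ZMod 8, X^2 = 4 → X = 2 ∨ X = 6 by decide) _ hx8
    refine ⟨x/2, ?_⟩
    rcases hx26 with h | h
    · have := hmod8 x 2 (by rw [h]; norm_num)
      omega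
    · have := hmod8 x 6 (by rw [h]; norm_num)
      omega
  have hw2 : w % 2 = 1 := by
    have hv : (w : ZMod 8) = 1 ∨ (w : ZMod 8) = 3 ∨ (w : ZMod 8) = 5 ∨ (w : ZMod 8) = 7 :=
      (show ∀ X : ZMod 8, X^2 = 1 → X = 1 ∨ X = 3 ∨ X = 5 ∨ X = 7 by decide) _ hw8
    rcases hv with h | h | h | h
    · have := hmod8 w 1 (by rw [h]; norm_num); omega
    · have := hmod8 w 3 (by rw [h]; norm_num); omega
    · have := hmod8 w 5 (by rw [h]; norm_num); omega
    · have := hmod8 w 7 (by rw [h]; norm_num); omega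
  -- prime factors of P
  have hpprod : ∀ r : ℕ, r.Prime → (r:ℤ) ∣ (P:ℤ) → ∃ i, r = p i := by
    intro r hr hrd
    have hrP : r ∣ P := by exact_mod_cast hrd
    rw [hPdef] at hrP
    obtain ⟨i, _, hi⟩ := (hr.prime.dvd_finset_prod_iff _).mp hrP
    exact ⟨i, (Nat.prime_dvd_prime_iff_eq hr (hp i)).mp hi⟩
  -- p i divides neither x nor w
  have hpx_and : ∀ i, ¬ (p i:ℤ) ∣ x ∧ ¬ (p i:ℤ) ∣ w := by
    intro i
    have hpp : Prime ((p i : ℕ) : ℤ) := Nat.prime_iff_prime_int.mp (hp i)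
    have hpne0 : ((p i : ℕ) : ℤ) ≠ 0 := by exact_mod_cast hpne i
    have hPfacN : P = p i * ∏ j ∈ univ.erase i, p j :=
      (Finset.mul_prod_erase univ p (mem_univ i)).symm
    have hPfac : (P:ℤ) = (p i:ℤ) * ((∏ j ∈ univ.erase i, p j : ℕ) : ℤ) := by
      rw [hPfacN]; push_cast; ring
    have hnotR : ¬ (p i:ℤ) ∣ ((∏ j ∈ univ.erase i, p j : ℕ) : ℤ) := by
      rw [Int.natCast_dvd_natCast]
      intro hdvd
      obtain ⟨j, hj, hij⟩ := ((hp i).prime.dvd_finset_prod_iff _).mp hdvd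
      exact (Finset.mem_erase.mp hj).1
        (hinj ((Nat.prime_dvd_prime_iff_eq (hp i) (hp j)).mp hij)).symm
    have hboth : (p i:ℤ) ∣ x → (p i:ℤ) ∣ w → False := by
      intro hdx hdw
      obtain ⟨a, ha⟩ := hdx
      obtain ⟨b, hb⟩ := hdw
      have key : (P:ℤ) * y^2 = (p i:ℤ) * ((p i:ℤ) * (a^2 - (q:ℤ)*b^2)) := by
        have h2 := heq2
        rw [ha, hb] at h2
        linear_combination (-1:ℤ) * h2
      rw [hPfac, mul_assoc] at key
      have key2 := mul_left_cancel₀ hpne0 key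
      have hdvd : (p i:ℤ) ∣ ((∏ j ∈ univ.erase i, p j : ℕ) : ℤ) * y^2 :=
        ⟨a^2 - (q:ℤ)*b^2, key2⟩
      rcases hpp.dvd_mul.mp hdvd with hR | hy2
      · exact hnotR hR
      · have hpy : (p i:ℤ) ∣ y := hpp.dvd_of_dvd_pow hy2
        have hgd : (p i:ℤ) ∣ (Int.gcd x y : ℤ) := Int.dvd_coe_gcd ⟨a, ha⟩ hpy
        rw [hgcd] at hgd
        have : p i ∣ 1 := by exact_mod_cast hgd
        exact (hp i).ne_one (Nat.dvd_one.mp this)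
    constructor
    · intro hdx
      have hdq : (p i:ℤ) ∣ (q:ℤ)*w^2 := by
        rw [← heq2, hPfac]
        exact dvd_sub (dvd_pow hdx two_ne_zero)
          (dvd_mul_of_dvd_left (dvd_mul_right _ _) _)
      rcases hpp.dvd_mul.mp hdq with hq' | hw2'
      · have : p i ∣ q := by exact_mod_cast hq'
        exact hpq i ((Nat.prime_dvd_prime_iff_eq (hp i) hq).mp this)
      · exact hboth hdx (hpp.dvd_of_dvd_pow hw2')
    · intro hdw
      have hdx2 : (p i:ℤ) ∣ x^2 := by
        have hx2eq : x^2 = (P:ℤ)*y^2 + (q:ℤ)*w^2 := by linarith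
        rw [hx2eq, hPfac]
        exact dvd_add (dvd_mul_of_dvd_left (dvd_mul_right _ _) _)
          ((dvd_pow hdw two_ne_zero).mul_left _)
      exact hboth (hpp.dvd_of_dvd_pow hdx2) hdw
  -- gcd facts
  have hgoal_contra : ∀ r : ℕ, r.Prime → (r:ℤ) ∣ x → (r:ℤ) ∣ y → False := by
    intro r hr hrx hry
    have hgd : (r:ℤ) ∣ (Int.gcd x y : ℤ) := Int.dvd_coe_gcd hrx hry
    rw [hgcd] at hgd
    have : r ∣ 1 := by exact_mod_cast hgd
    exact hr.ne_one (Nat.dvd_one.mp this)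
  have hgxw : Int.gcd x w = 1 := by
    refine gcd_one_of_no_prime fun r hr hrx hrw => ?_
    by_cases hrP : (r:ℤ) ∣ (P:ℤ)
    · obtain ⟨i, rfl⟩ := hpprod r hr hrP
      exact (hpx_and i).1 hrx
    · have hPy2 : (r:ℤ) ∣ (P:ℤ)*y^2 := by
        have hPy : (P:ℤ)*y^2 = x^2 - (q:ℤ)*w^2 := by linarith
        rw [hPy]
        exact dvd_sub (dvd_pow hrx two_ne_zero) ((dvd_pow hrw two_ne_zero).mul_left _)
      rcases (Nat.prime_iff_prime_int.mp hr).dvd_mul.mp hPy2 with h | h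
      · exact hrP h
      · exact hgoal_contra r hr hrx ((Nat.prime_iff_prime_int.mp hr).dvd_of_dvd_pow h)
  have hgyw : Int.gcd y w = 1 := by
    refine gcd_one_of_no_prime fun r hr hry hrw => ?_
    have hrx2 : (r:ℤ) ∣ x^2 := by
      have hx2eq : x^2 = (P:ℤ)*y^2 + (q:ℤ)*w^2 := by linarith
      rw [hx2eq]
      exact dvd_add ((dvd_pow hry two_ne_zero).mul_left _)
        ((dvd_pow hrw two_ne_zero).mul_left _)
    exact hgoal_contra r hr ((Nat.prime_iff_prime_int.mp hr).dvd_of_dvd_pow hrx2) hry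
  have hgyu : Int.gcd y u = 1 := by
    refine gcd_one_of_no_prime fun r hr hry hru => ?_
    exact hgoal_contra r hr (by rw [hxu]; exact hru.mul_left 2) hry
  have hgzu : Int.gcd z u = 1 := by
    refine gcd_one_of_no_prime fun r hr hrz hru => ?_
    have hrx : (r:ℤ) ∣ x := by rw [hxu]; exact hru.mul_left 2
    by_cases hrP : (r:ℤ) ∣ (P:ℤ)
    · obtain ⟨i, rfl⟩ := hpprod r hr hrP
      exact (hpx_and i).1 hrx
    · have hPy2 : (r:ℤ) ∣ (P:ℤ)*y^2 := by
        have hPy : (P:ℤ)*y^2 = z^2 - x^2 := by linarith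
        rw [hPy]
        exact dvd_sub (dvd_pow hrz two_ne_zero) (dvd_pow hrx two_ne_zero)
      rcases (Nat.prime_iff_prime_int.mp hr).dvd_mul.mp hPy2 with h | h
      · exact hrP h
      · exact hgoal_contra r hr hrx ((Nat.prime_iff_prime_int.mp hr).dvd_of_dvd_pow h)
  have hgxwp : ∀ i, Int.gcd (x*w) (p i) = 1 := by
    intro i
    refine gcd_one_of_no_prime fun r hr hrxw hrp => ?_
    have hrpi : r ∣ p i := by exact_mod_cast hrp
    obtain rfl := (Nat.prime_dvd_prime_iff_eq hr (hp i)).mp hrpi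
    rcases (Nat.prime_iff_prime_int.mp hr).dvd_mul.mp hrxw with h | h
    exacts [(hpx_and i).1 h, (hpx_and i).2 h]
  -- the quartic condition equals the jacobi symbol condition
  have hiff : ∀ i, ((q : ZMod (p i)) ^ ((p i - 1) / 4) = -1) ↔ jacobiSym (x*w) (p i) = -1 := by
    intro i
    haveI := instF i
    have hpi8 : p i % 8 = 5 := hp5 i
    have hPdvd : ((P:ℕ) : ZMod (p i)) = 0 := by
      rw [ZMod.natCast_eq_zero_iff, hPdef]
      exact Finset.dvd_prod_of_mem p (mem_univ i)
    have hW : ((w : ℤ) : ZMod (p i)) ≠ 0 := by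
      rw [Ne, ZMod.intCast_zmod_eq_zero_iff_dvd]; exact (hpx_and i).2
    have hcast2 : ((x : ℤ) : ZMod (p i))^2 = (q : ZMod (p i)) * ((w:ℤ): ZMod (p i))^2 := by
      have h := congrArg (fun n : ℤ => (n : ZMod (p i))) heq2
      push_cast at h
      rwa [hPdvd, zero_mul, sub_zero] at h
    have harith1 : 2 * ((p i - 1)/4) = p i / 2 := by omega
    have harith2 : p i / 2 + p i / 2 = p i - 1 := by omega
    have hqe : (q : ZMod (p i)) ^ ((p i - 1)/4) = ((x*w : ℤ) : ZMod (p i)) ^ (p i / 2) := by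
      have hW2 : ((w:ℤ): ZMod (p i))^2 ≠ 0 := pow_ne_zero _ hW
      have hq' : (q : ZMod (p i)) = ((x:ℤ): ZMod (p i))^2 * (((w:ℤ): ZMod (p i))^2)⁻¹ := by
        field_simp
        exact hcast2.symm
      rw [hq', mul_pow, ← pow_mul, inv_pow, ← pow_mul, harith1]
      rw [show ((x*w : ℤ) : ZMod (p i)) = ((x:ℤ): ZMod (p i)) * ((w:ℤ): ZMod (p i)) by push_cast; ring,
        mul_pow]
      congr 1
      refine inv_eq_of_mul_eq_one_right ?_
      rw [← pow_add, harith2]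
      exact ZMod.pow_card_sub_one_eq_one hW
    have hlcast : (legendreSym (p i) (x*w) : ZMod (p i)) = ((x*w : ℤ) : ZMod (p i)) ^ (p i / 2) :=
      legendreSym.eq_pow (p i) (x*w)
    have hqL : (q : ZMod (p i)) ^ ((p i - 1)/4) = (legendreSym (p i) (x*w) : ZMod (p i)) := by
      rw [hqe, hlcast]
    haveI : Fact (2 < p i) := ⟨by omega⟩
    have hxw0 : ((x*w : ℤ) : ZMod (p i)) ≠ 0 := by
      rw [Ne, ZMod.intCast_zmod_eq_zero_iff_dvd]
      intro hdvd
      rcases (Nat.prime_iff_prime_int.mp (hp i)).dvd_mul.mp hdvd with h | h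
      exacts [(hpx_and i).1 h, (hpx_and i).2 h]
    rw [← jacobiSym.legendreSym.to_jacobiSym]
    constructor
    · intro hcond
      rcases legendreSym.eq_one_or_neg_one (p i) hxw0 with h1 | h1
      · exfalso
        rw [hqL, h1] at hcond
        rw [Int.cast_one] at hcond
        exact ZMod.neg_one_ne_one hcond.symm
      · exact h1
    · intro h1
      rw [hqL, h1]
      push_cast
      ring
  have hfilter : (univ.filter fun i => (q : ZMod (p i)) ^ ((p i - 1) / 4) = -1)
      = univ.filter fun i => jacobiSym (x*w) (p i) = -1 :=
    Finset.filter_congr fun i _ => hiff i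
  -- jacobi symbol computations
  have hprodJ : ∏ i, jacobiSym (x*w) (p i) = jacobiSym (x*w) P := by
    rw [hPdef, jacobi_prod_right (x*w) univ p fun i _ => hpne i]
  have hJ2 : jacobiSym 2 P = -1 := by
    rw [jacobiSym.at_two hPodd, hP8z]
    decide
  have hχ₄ : ZMod.χ₄ (P : ZMod 4) = 1 := by
    rw [show ((P:ℕ) : ZMod 4) = 1 by rw [← ZMod.natCast_mod, hP4]; rfl]
    decide
  have habs : ∀ a : ℤ, jacobiSym a P = jacobiSym (a.natAbs : ℤ) P := by
    intro a
    rcases Int.natAbs_eq a with h | h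
    · conv_lhs => rw [h]
    · conv_lhs => rw [h]
      rw [jacobiSym.neg _ hPodd, hχ₄, one_mul]
  have hUodd : Odd (u.natAbs) := Int.natAbs_odd.mpr (Int.odd_iff.mpr hu2)
  have hWodd : Odd (w.natAbs) := Int.natAbs_odd.mpr (Int.odd_iff.mpr hw2)
  have hJPu : jacobiSym (P : ℤ) (u.natAbs) = 1 := by
    have hme : (P:ℤ)*y^2 ≡ z^2 [ZMOD (u.natAbs : ℤ)] := by
      refine Int.ModEq.symm (Int.modEq_iff_dvd.mpr ?_)
      have hzx : (P:ℤ)*y^2 - z^2 = (u : ℤ) * (-4*u) := by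
        have h1 := heq1
        rw [hxu] at h1
        linear_combination h1
      rw [hzx]
      exact (Int.natAbs_dvd.mpr dvd_rfl).mul_right _
    have h1 : jacobiSym ((P:ℤ)*y^2) u.natAbs = jacobiSym (z^2) u.natAbs :=
      jacobiSym.mod_left' hme
    rw [jacobiSym.mul_left,
      jacobiSym.sq_one' (show Int.gcd y (u.natAbs:ℕ) = 1 by
        rw [show ((u.natAbs:ℕ):ℤ) = (u.natAbs:ℤ) from rfl] at *
        rw [show Int.gcd y ((u.natAbs:ℕ):ℤ) = Int.gcd y u from by
          rw [gcd_natAbs_right]]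
        exact hgyu),
      jacobiSym.sq_one' (show Int.gcd z ((u.natAbs:ℕ):ℤ) = 1 by
        rw [show Int.gcd z ((u.natAbs:ℕ):ℤ) = Int.gcd z u from by rw [gcd_natAbs_right]]
        exact hgzu), mul_one] at h1
    exact h1
  have hJPw : jacobiSym (P : ℤ) (w.natAbs) = 1 := by
    have hme : (P:ℤ)*y^2 ≡ x^2 [ZMOD (w.natAbs : ℤ)] := by
      refine Int.ModEq.symm (Int.modEq_iff_dvd.mpr ?_)
      have hzx : (P:ℤ)*y^2 - x^2 = w * (-(q:ℤ)*w) := by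
        linear_combination (-1:ℤ) * heq2
      rw [hzx]
      exact (Int.natAbs_dvd.mpr dvd_rfl).mul_right _
    have h1 : jacobiSym ((P:ℤ)*y^2) w.natAbs = jacobiSym (x^2) w.natAbs :=
      jacobiSym.mod_left' hme
    rw [jacobiSym.mul_left,
      jacobiSym.sq_one' (show Int.gcd y ((w.natAbs:ℕ):ℤ) = 1 by
        rw [show Int.gcd y ((w.natAbs:ℕ):ℤ) = Int.gcd y w from by rw [gcd_natAbs_right]]
        exact hgyw),
      jacobiSym.sq_one' (show Int.gcd x ((w.natAbs:ℕ):ℤ) = 1 by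
        rw [show Int.gcd x ((w.natAbs:ℕ):ℤ) = Int.gcd x w from by rw [gcd_natAbs_right]]
        exact hgxw), mul_one] at h1
    exact h1
  have hJuw : jacobiSym (u*w) P = 1 := by
    rw [jacobiSym.mul_left, habs u, habs w,
      jacobiSym.quadratic_reciprocity_one_mod_four' hUodd hP4,
      jacobiSym.quadratic_reciprocity_one_mod_four' hWodd hP4, hJPu, hJPw, mul_one]
  have hJxw : jacobiSym (x*w) P = -1 := by
    rw [show x*w = 2*(u*w) by rw [hxu]; ring, jacobiSym.mul_left, hJ2, hJuw, mul_one]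
  -- parity
  rw [hfilter]
  have hsplit : ∏ i, jacobiSym (x*w) (p i)
      = (-1:ℤ)^((univ.filter fun i => jacobiSym (x*w) (p i) = -1).card) := by
    rw [← Finset.prod_filter_mul_prod_filter_not univ (fun i => jacobiSym (x*w) (p i) = -1)]
    rw [Finset.prod_congr rfl (fun i hi => (Finset.mem_filter.mp hi).2), Finset.prod_const]
    rw [Finset.prod_eq_one fun i hi => ?_, mul_one]
    rcases jacobiSym.eq_one_or_neg_one (hgxwp i) with h | h
    · exact h
    · exact absurd h (Finset.mem_filter.mp hi).2
  have hcard : (-1:ℤ)^((univ.filter fun i => jacobiSym (x*w) (p i) = -1).card) = -1 := by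
    rw [← hsplit, hprodJ, hJxw]
  by_contra hodd
  rw [Nat.not_odd_iff_even] at hodd
  rw [hodd.neg_one_pow] at hcard
  norm_num at hcard
end
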